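/- The survival function of the modified exponential distribution is Ḡ(t) = e^{-αt} - 2√π Φ(-√(2αt)) (αt)^{1/2}, i.e., the derivative of 1 - Ḡ(t) equals g(t) = α√π Φ(-√(2αt))/√(αt) for t > 0, and Ḡ(0)=1, Ḡ(t) → 0 as t → ∞. -/

import Mathlib

open MeasureTheory Set Real Filter
open Topology

/-- The standard normal distribution function Φ. -/
noncomputable def Phi (z : ℝ) : ℝ :=
  (Real.sqrt (2 * Real.pi))⁻¹ * ∫ y in Set.Iic z, Real.exp (-y ^ 2 / 2)

lemma gauss_eq : (fun y : ℝ => Real.exp (-y ^ 2 / 2)) = fun y => Real.exp (-(1/2) * y ^ 2) := by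
  funext y; congr 1; ring

lemma gauss_integrable : Integrable (fun y : ℝ => Real.exp (-y ^ 2 / 2)) := by
  rw [gauss_eq]; exact integrable_exp_neg_mul_sq (by norm_num)

lemma gauss_cont : Continuous (fun y : ℝ => Real.exp (-y ^ 2 / 2)) := by
  continuity

lemma hasDerivAt_Phi (z : ℝ) :
    HasDerivAt Phi ((Real.sqrt (2 * Real.pi))⁻¹ * Real.exp (-z ^ 2 / 2)) z := by
  have hg := gauss_integrable
  have key : Phi = fun u => (Real.sqrt (2 * Real.pi))⁻¹ *
      ((∫ y in Iic (0:ℝ), Real.exp (-y ^ 2 / 2)) + ∫ y in (0:ℝ)..u, Real.exp (-y ^ 2 / 2)) := by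
    funext u
    rw [← intervalIntegral.integral_Iic_sub_Iic hg.integrableOn hg.integrableOn]
    unfold Phi; ring
  rw [key]
  have hd : HasDerivAt (fun u => ∫ y in (0:ℝ)..u, Real.exp (-y ^ 2 / 2))
      (Real.exp (-z ^ 2 / 2)) z :=
    intervalIntegral.integral_hasDerivAt_right hg.intervalIntegrable
      (gauss_cont.stronglyMeasurableAtFilter _ _) gauss_cont.continuousAt
  exact (hd.const_add _).const_mul _

/-- The survival function of the modified exponential distribution. -/
noncomputable def modExpSurv (α t : ℝ) : ℝ :=
  Real.exp (-(α * t)) - 2 * Real.sqrt Real.pi * Phi (-Real.sqrt (2 * α * t)) * Real.sqrt (α * t)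

lemma Phi_nonneg (z : ℝ) : 0 ≤ Phi z :=
  mul_nonneg (inv_nonneg.2 (Real.sqrt_nonneg _))
    (setIntegral_nonneg measurableSet_Iic fun y _ => (Real.exp_pos _).le)

lemma gauss_tail {x : ℝ} (hx : 1 ≤ x) :
    (∫ y in Iic (-x), Real.exp (-y ^ 2 / 2)) ≤ Real.exp (-x ^ 2 / 2) := by
  have hflip : (∫ y in Iic (-x), Real.exp (-y ^ 2 / 2))
      = ∫ y in Ioi x, Real.exp (-y ^ 2 / 2) := by
    have := integral_comp_neg_Iic (-x) (fun y => Real.exp (-y ^ 2 / 2))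
    simp only [neg_neg, neg_sq] at this
    exact this
  have hderiv : ∀ y ∈ Ici x, HasDerivAt (fun s : ℝ => -Real.exp (-s ^ 2 / 2))
      (y * Real.exp (-y ^ 2 / 2)) y := by
    intro y _
    have h1 : HasDerivAt (fun s : ℝ => -s ^ 2 / 2) (-y) y := by
      have h := ((hasDerivAt_pow 2 y).neg).div_const 2
      refine h.congr_deriv ?_
      simp; ring
    have h2 := h1.exp.neg
    exact h2.congr_deriv (by ring)
  have f'int : IntegrableOn (fun y : ℝ => y * Real.exp (-y ^ 2 / 2)) (Ioi x) := by
    have h : Integrable (fun y : ℝ => y * Real.exp (-(1/2) * y ^ 2)) :=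
      integrable_mul_exp_neg_mul_sq (by norm_num)
    have e : (fun y : ℝ => y * Real.exp (-y ^ 2 / 2))
        = fun y => y * Real.exp (-(1/2) * y ^ 2) := by
      funext y; congr 2; ring
    rw [e]; exact h.integrableOn
  have hf : Tendsto (fun s : ℝ => -Real.exp (-s ^ 2 / 2)) atTop (𝓝 0) := by
    rw [show (0:ℝ) = -0 by ring]
    apply Tendsto.neg
    apply Real.tendsto_exp_atBot.comp
    have h1 : Tendsto (fun s : ℝ => s ^ 2) atTop atTop := tendsto_pow_atTop two_ne_zero
    have h2 : Tendsto (fun s : ℝ => -s ^ 2) atTop atBot := tendsto_neg_atBot_iff.2 h1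
    exact h2.atBot_div_const two_pos
  have hint := integral_Ioi_of_hasDerivAt_of_tendsto' hderiv f'int hf
  rw [hflip]
  calc (∫ y in Ioi x, Real.exp (-y ^ 2 / 2))
      ≤ ∫ y in Ioi x, y * Real.exp (-y ^ 2 / 2) :=
        setIntegral_mono_on gauss_integrable.integrableOn f'int measurableSet_Ioi
          (fun y hy => le_mul_of_one_le_left (Real.exp_pos _).le (hx.trans (le_of_lt hy)))
    _ = Real.exp (-x ^ 2 / 2) := by rw [hint]; simp

/-- the derivative of 1 - Ḡ(t) is g(t) = α√π Φ(-√(2αt))/√(αt) for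
t > 0, with Ḡ(0) = 1 and Ḡ(t) → 0 as t → ∞. -/
theorem modified_exponential_survival (α : ℝ) (hα : 0 < α) :
    (∀ t : ℝ, 0 < t →
      HasDerivAt (fun s => 1 - modExpSurv α s)
        (α * Real.sqrt Real.pi * Phi (-Real.sqrt (2 * α * t)) / Real.sqrt (α * t)) t) ∧
    modExpSurv α 0 = 1 ∧
    Tendsto (fun t => modExpSurv α t) atTop (nhds 0) := by
  refine ⟨?_, ?_, ?_⟩
  · intro t ht
    have hαt : (0:ℝ) < α * t := mul_pos hα ht
    have h2αt : (0:ℝ) < 2 * α * t := by positivity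
    have hlin : HasDerivAt (fun s : ℝ => α * s) α t := by
      simpa using (hasDerivAt_id t).const_mul α
    have hlin2 : HasDerivAt (fun s : ℝ => 2 * α * s) (2 * α) t := by
      simpa using (hasDerivAt_id t).const_mul (2 * α)
    have hexp : HasDerivAt (fun s : ℝ => Real.exp (-(α * s)))
        (-α * Real.exp (-(α * t))) t := by
      have := hlin.neg.exp
      exact this.congr_deriv (by simp only [Pi.neg_apply]; ring)
    have hs1 : HasDerivAt (fun s : ℝ => Real.sqrt (2 * α * s))
        (2 * α / (2 * Real.sqrt (2 * α * t))) t := hlin2.sqrt h2αt.ne'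
    have hs2 : HasDerivAt (fun s : ℝ => Real.sqrt (α * s))
        (α / (2 * Real.sqrt (α * t))) t := hlin.sqrt hαt.ne'
    have hPhi : HasDerivAt (fun s : ℝ => Phi (-Real.sqrt (2 * α * s)))
        ((Real.sqrt (2 * Real.pi))⁻¹ * Real.exp (-(Real.sqrt (2 * α * t)) ^ 2 / 2)
          * -(2 * α / (2 * Real.sqrt (2 * α * t)))) t := by
      have := (hasDerivAt_Phi (-Real.sqrt (2 * α * t))).comp t hs1.neg
      exact this.congr_deriv (by rw [neg_sq])
    have hprod := (hPhi.const_mul (2 * Real.sqrt Real.pi)).mul hs2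
    have htot := (hexp.sub hprod).const_sub 1
    have hG : (fun s : ℝ => 1 - modExpSurv α s)
        = fun s => 1 - (Real.exp (-(α * s))
          - 2 * Real.sqrt Real.pi * Phi (-Real.sqrt (2 * α * s)) * Real.sqrt (α * s)) := by
      funext s; rfl
    rw [hG]
    refine htot.congr_deriv ?_
    symm
    -- value equality
    have hsq : (Real.sqrt (2 * α * t)) ^ 2 = 2 * α * t := Real.sq_sqrt h2αt.le
    rw [hsq]
    have hE : Real.exp (-(2 * α * t) / 2) = Real.exp (-(α * t)) := by congr 1; ring
    have hs1eq : Real.sqrt (2 * α * t) = Real.sqrt 2 * Real.sqrt (α * t) := by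
      rw [← Real.sqrt_mul (by norm_num : (0:ℝ) ≤ 2)]; ring_nf
    have h2π : Real.sqrt (2 * Real.pi) = Real.sqrt 2 * Real.sqrt Real.pi :=
      Real.sqrt_mul (by norm_num) _
    have hs2pos : (0:ℝ) < Real.sqrt (α * t) := Real.sqrt_pos.2 hαt
    have h2pos : (0:ℝ) < Real.sqrt 2 := Real.sqrt_pos.2 (by norm_num)
    have hπpos : (0:ℝ) < Real.sqrt Real.pi := Real.sqrt_pos.2 Real.pi_pos
    have h22 : Real.sqrt 2 * Real.sqrt 2 = 2 := Real.mul_self_sqrt (by norm_num)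
    rw [hE, hs1eq, h2π]
    field_simp
    ring_nf
    rw [show Real.sqrt 2 ^ 2 = 2 from Real.sq_sqrt (by norm_num)]
    ring
  · simp [modExpSurv, Phi]
  · have hat : Tendsto (fun t : ℝ => α * t) atTop atTop :=
      Tendsto.const_mul_atTop hα tendsto_id
    have h1 : Tendsto (fun t : ℝ => Real.exp (-(α * t))) atTop (𝓝 0) :=
      Real.tendsto_exp_atBot.comp (tendsto_neg_atBot_iff.2 hat)
    have h2 : Tendsto (fun t : ℝ => 2 * Real.sqrt Real.pi
        * Phi (-Real.sqrt (2 * α * t)) * Real.sqrt (α * t)) atTop (𝓝 0) := by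
      have hbound : Tendsto (fun t : ℝ => 2 * Real.sqrt Real.pi * (Real.sqrt (2 * Real.pi))⁻¹
          * ((α * t) ^ 1 * Real.exp (-(α * t)))) atTop (𝓝 0) := by
        have := ((tendsto_pow_mul_exp_neg_atTop_nhds_zero 1).comp hat).const_mul
          (2 * Real.sqrt Real.pi * (Real.sqrt (2 * Real.pi))⁻¹)
        simpa using this
      apply squeeze_zero' (g := fun t : ℝ => 2 * Real.sqrt Real.pi * (Real.sqrt (2 * Real.pi))⁻¹
          * ((α * t) ^ 1 * Real.exp (-(α * t))))
      · filter_upwards with t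
        have := Phi_nonneg (-Real.sqrt (2 * α * t))
        positivity
      · filter_upwards [eventually_ge_atTop (1/α)] with t ht
        have hαt : (1:ℝ) ≤ α * t := by
          have h := (div_le_iff₀ hα).1 ht; nlinarith
        have h2αt : (1:ℝ) ≤ 2 * α * t := by nlinarith
        have hs1 : (1:ℝ) ≤ Real.sqrt (2 * α * t) := by
          rw [show (1:ℝ) = Real.sqrt 1 by simp]
          exact Real.sqrt_le_sqrt h2αt
        have hPhile : Phi (-Real.sqrt (2 * α * t)) ≤ (Real.sqrt (2 * Real.pi))⁻¹
            * Real.exp (-(α * t)) := by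
          have htail := gauss_tail hs1
          have hsq : (Real.sqrt (2 * α * t)) ^ 2 = 2 * α * t := by
            apply Real.sq_sqrt; nlinarith
          rw [hsq] at htail
          have hEeq : Real.exp (-(2 * α * t) / 2) = Real.exp (-(α * t)) := by congr 1; ring
          rw [hEeq] at htail
          unfold Phi
          have hc : (0:ℝ) ≤ (Real.sqrt (2 * Real.pi))⁻¹ := by positivity
          exact mul_le_mul_of_nonneg_left htail hc
        have hsqrtle : Real.sqrt (α * t) ≤ α * t := by
          have h := Real.sqrt_le_sqrt (show α * t ≤ (α * t) ^ 2 by nlinarith)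
          rwa [Real.sqrt_sq (by positivity)] at h
        calc 2 * Real.sqrt Real.pi * Phi (-Real.sqrt (2 * α * t)) * Real.sqrt (α * t)
            ≤ 2 * Real.sqrt Real.pi * ((Real.sqrt (2 * Real.pi))⁻¹ * Real.exp (-(α * t)))
              * (α * t) := by
              apply mul_le_mul
              · apply mul_le_mul_of_nonneg_left hPhile (by positivity)
              · exact hsqrtle
              · exact Real.sqrt_nonneg _
              · positivity
          _ = 2 * Real.sqrt Real.pi * (Real.sqrt (2 * Real.pi))⁻¹
              * ((α * t) ^ 1 * Real.exp (-(α * t))) := by ring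
      · exact hbound
    have := h1.sub h2
    simpa [modExpSurv] using this
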